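/- Let f: ℝⁿ → ℝ be twice continuously differentiable with M-Lipschitz Hessian, and suppose (∇²f(x)+μI)d = -∇f(x) with M‖d‖ ≤ μ ≤ 2M‖d‖. Then ⟨∇f(x+d), −d⟩ ≥ (√6/6)·‖∇f(x+d)‖^{3/2}/√M. -/

import Mathlib

open Real
open scoped RealInnerProductSpace

section helpers

open intervalIntegral in
/-- Quadratic Taylor remainder bound for a map with Lipschitz derivative. -/
lemma taylor_bound_aux {E : Type*} [NormedAddCommGroup E] [NormedSpace ℝ E]
    {F : Type*} [NormedAddCommGroup F] [NormedSpace ℝ F] [CompleteSpace F]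
    (φ : E → F) (M : ℝ) (hM : 0 ≤ M)
    (hdiff : Differentiable ℝ φ)
    (hcontf : Continuous (fderiv ℝ φ))
    (hLip : ∀ u v, ‖fderiv ℝ φ u - fderiv ℝ φ v‖ ≤ M * ‖u - v‖)
    (x d : E) :
    ‖φ (x + d) - φ x - fderiv ℝ φ x d‖ ≤ M / 2 * ‖d‖ ^ 2 := by
  set ψ : ℝ → F := fun t => φ (x + t • d) - t • (fderiv ℝ φ x d) with hψ
  set ψ' : ℝ → F := fun t => fderiv ℝ φ (x + t • d) d - fderiv ℝ φ x d with hψ'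
  have hline : ∀ t : ℝ, HasDerivAt (fun s : ℝ => x + s • d) d t := by
    intro t
    simpa using ((hasDerivAt_id t).smul_const d).const_add x
  have hderiv : ∀ t : ℝ, HasDerivAt ψ (ψ' t) t := by
    intro t
    have h2 : HasDerivAt (fun s : ℝ => s • (fderiv ℝ φ x d)) (fderiv ℝ φ x d) t := by
      simpa using (hasDerivAt_id t).smul_const (fderiv ℝ φ x d)
    exact ((hdiff (x + t • d)).hasFDerivAt.comp_hasDerivAt t (hline t)).sub h2
  have hcont : Continuous ψ' := by
    apply Continuous.sub _ continuous_const
    exact (hcontf.comp (by continuity)).clm_apply continuous_const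
  have hint : IntervalIntegrable ψ' MeasureTheory.volume 0 1 :=
    hcont.intervalIntegrable _ _
  have heq : ∫ t in (0:ℝ)..1, ψ' t = ψ 1 - ψ 0 :=
    integral_eq_sub_of_hasDerivAt (fun t _ => hderiv t) hint
  have hψval : ψ 1 - ψ 0 = φ (x + d) - φ x - fderiv ℝ φ x d := by
    simp [hψ]
    abel
  have hbound : ‖∫ t in (0:ℝ)..1, ψ' t‖ ≤ |∫ t in (0:ℝ)..1, M * ‖d‖ ^ 2 * t| := by
    apply norm_integral_le_abs_of_norm_le
    · apply MeasureTheory.ae_restrict_of_forall_mem (by measurability)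
      intro t ht
      rw [Set.uIoc_of_le (by norm_num : (0:ℝ) ≤ 1)] at ht
      have h1 : ψ' t = (fderiv ℝ φ (x + t • d) - fderiv ℝ φ x) d := rfl
      rw [h1]
      calc ‖(fderiv ℝ φ (x + t • d) - fderiv ℝ φ x) d‖
          ≤ ‖fderiv ℝ φ (x + t • d) - fderiv ℝ φ x‖ * ‖d‖ :=
            ContinuousLinearMap.le_opNorm _ _
        _ ≤ (M * ‖(x + t • d) - x‖) * ‖d‖ := by
            apply mul_le_mul_of_nonneg_right (hLip _ _) (norm_nonneg _)
        _ = M * ‖d‖ ^ 2 * t := by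
            rw [add_sub_cancel_left, norm_smul, Real.norm_eq_abs,
              abs_of_pos ht.1]
            ring
    · exact (Continuous.intervalIntegrable (by continuity) _ _)
  have hval : ∫ t in (0:ℝ)..1, M * ‖d‖ ^ 2 * t = M / 2 * ‖d‖ ^ 2 := by
    rw [intervalIntegral.integral_const_mul, integral_id]
    ring
  rw [heq, hψval, hval, abs_of_nonneg (by positivity)] at hbound
  exact hbound

/-- The AM–GM step: minimizing `G²/(4Mt) + (3/16)Mt³` gives `(√6/6)G^{3/2}/√M`. -/
lemma key_ineq_aux (M s G : ℝ) (hM : 0 < M) (hs : 0 < s) (hG : 0 ≤ G) :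
    Real.sqrt 6 / 6 * G ^ ((3:ℝ)/2) / Real.sqrt M ≤ G^2/(4*M*s) + 3/8*M*s^3 := by
  set u := Real.sqrt G with hu'
  set m := Real.sqrt M with hm'
  set q := Real.sqrt 6 with hq'
  have hu : 0 ≤ u := Real.sqrt_nonneg _
  have hm : 0 < m := Real.sqrt_pos.mpr hM
  have hq : 0 ≤ q := Real.sqrt_nonneg _
  have hq2 : q^2 = 6 := Real.sq_sqrt (by norm_num)
  have hG' : G = u^2 := (Real.sq_sqrt hG).symm
  have hM' : M = m^2 := (Real.sq_sqrt hM.le).symm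
  have h32 : G ^ ((3:ℝ)/2) = u^3 := by
    rw [hu', Real.sqrt_eq_rpow, ← Real.rpow_natCast (G ^ ((1:ℝ)/2)) 3,
      ← Real.rpow_mul hG]
    norm_num
  rw [h32, hG', hM']
  have hid : (3*(m*s) - q*u)^2*((3*(m*s)+q*u)^2+12*u^2)
      = 9*(12*u^4 + 9*(m*s)^4 - 8*q*u^3*(m*s)) := by
    linear_combination (u^4*(q^2+18) - 18*u^2*(m*s)^2) * hq2
  have key : 8*q*u^3*(m*s) ≤ 12*u^4 + 9*(m*s)^4 := by
    nlinarith [mul_nonneg (sq_nonneg (3*(m*s) - q*u))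
      (show (0:ℝ) ≤ (3*(m*s)+q*u)^2 + 12*u^2 by positivity), hid]
  rw [← sub_nonneg]
  have expand : (u^2)^2/(4*m^2*s) + 3/8*m^2*s^3 - q/6*u^3/m
      = (12*u^4 + 18*(m*s)^4 - 8*q*u^3*(m*s))/(48*m^2*s) := by
    field_simp
    ring
  rw [expand]
  apply div_nonneg _ (by positivity)
  have h4 : (0:ℝ) ≤ (m*s)^4 := by positivity
  linarith [key]

/-- Purely scalar part of the chain of inequalities. -/
lemma scalar_step_aux (M μ s G R X : ℝ) (hM : 0 < M) (hs : 0 < s) (hμpos : 0 < μ)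
    (hμl : M*s ≤ μ) (hμu : μ ≤ 2*M*s) (hR0 : 0 ≤ R) (hRle : R ≤ M/2*s^2)
    (h2 : X*(2*μ) = μ^2*s^2 + G^2 - R^2) :
    G^2/(4*M*s) + 3/8*M*s^3 ≤ X := by
  have hne : (2*μ) ≠ 0 := by positivity
  have e1 : X = (μ^2*s^2 + G^2 - R^2)/(2*μ) := (eq_div_iff hne).mpr h2
  have esplit : (μ^2*s^2 + G^2 - R^2)/(2*μ)
      = μ*s^2/2 + G^2/(2*μ) - R^2/(2*μ) := by field_simp
  have hA : G^2/(4*M*s) ≤ G^2/(2*μ) :=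
    div_le_div_of_nonneg_left (by positivity) (by positivity) (by linarith)
  have hRb : R^2/(2*μ) ≤ M*s^3/8 := by
    have h1 : R^2 ≤ (M/2*s^2)^2 := by nlinarith
    calc R^2/(2*μ) ≤ (M/2*s^2)^2/(2*(M*s)) :=
          div_le_div₀ (by positivity) h1 (by positivity) (by linarith)
      _ = M*s^3/8 := by field_simp; ring
  have hμs : M*s^3/2 ≤ μ*s^2/2 := by nlinarith
  rw [e1, esplit]
  linarith

end helpers

/-- If `f` is twice continuously differentiable with `M`-Lipschitz Hessian and
`(∇²f(x) + μI) d = -∇f(x)` with `M‖d‖ ≤ μ ≤ 2M‖d‖`, then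
`⟨∇f(x+d), -d⟩ ≥ (√6/6)‖∇f(x+d)‖^{3/2}/√M`. -/
theorem stmt2 {n : ℕ} (f : EuclideanSpace ℝ (Fin n) → ℝ) (M μ : ℝ)
    (x d : EuclideanSpace ℝ (Fin n))
    (hf : ContDiff ℝ 2 f) (hM : 0 < M)
    (hLip : ∀ u v : EuclideanSpace ℝ (Fin n),
      ‖fderiv ℝ (gradient f) u - fderiv ℝ (gradient f) v‖ ≤ M * ‖u - v‖)
    (hμl : M * ‖d‖ ≤ μ) (hμu : μ ≤ 2 * M * ‖d‖)
    (heq : (fderiv ℝ (gradient f) x) d + μ • d = - gradient f x) :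
    ⟪gradient f (x + d), -d⟫ ≥
      Real.sqrt 6 / 6 * ‖gradient f (x + d)‖ ^ ((3 : ℝ) / 2) / Real.sqrt M := by
  have hg1 : ContDiff ℝ 1 (gradient f) := by
    have h1 : ContDiff ℝ 1 (fderiv ℝ f) := hf.fderiv_right (by norm_num)
    have h2 : gradient f = fun y =>
        (InnerProductSpace.toDual ℝ (EuclideanSpace ℝ (Fin n))).symm (fderiv ℝ f y) := rfl
    rw [h2]
    exact (InnerProductSpace.toDual ℝ (EuclideanSpace ℝ (Fin n))).symm.contDiff.comp h1
  have hgdiff : Differentiable ℝ (gradient f) := hg1.differentiable (by norm_num)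
  have hgcont : Continuous (fderiv ℝ (gradient f)) := hg1.continuous_fderiv (by norm_num)
  by_cases hd0 : d = 0
  · have hgx : gradient f x = 0 := by simpa [hd0] using heq.symm
    simp [hd0, hgx, Real.zero_rpow (by norm_num : ((3:ℝ)/2) ≠ 0)]
  · have hs : (0:ℝ) < ‖d‖ := norm_pos_iff.mpr hd0
    have hμpos : (0:ℝ) < μ := lt_of_lt_of_le (by positivity) hμl
    set r := gradient f (x + d) - gradient f x - (fderiv ℝ (gradient f) x) d with hr
    have hRle : ‖r‖ ≤ M / 2 * ‖d‖ ^ 2 :=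
      taylor_bound_aux (gradient f) M hM.le hgdiff hgcont hLip x d
    have h0 : gradient f x + ((fderiv ℝ (gradient f) x) d + μ • d) = 0 := by
      rw [heq]; simp
    have hgp : gradient f (x + d) = r - μ • d := by
      have h1 : r - μ • d = gradient f (x + d)
          - (gradient f x + ((fderiv ℝ (gradient f) x) d + μ • d)) := by
        rw [hr]; abel
      rw [h1, h0, sub_zero]
    have identA : ⟪gradient f (x + d), -d⟫ = μ * ‖d‖^2 - ⟪r, d⟫ := by
      rw [hgp, inner_sub_left, inner_neg_right, inner_neg_right,
        real_inner_smul_left, real_inner_self_eq_norm_sq]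
      ring
    have identB : ‖gradient f (x + d)‖^2
        = ‖r‖^2 - 2*μ*⟪r, d⟫ + μ^2*‖d‖^2 := by
      rw [hgp, norm_sub_sq_real, real_inner_smul_right, norm_smul,
        Real.norm_eq_abs, mul_pow, sq_abs]
      ring
    have h2 : ⟪gradient f (x + d), -d⟫ * (2*μ)
        = μ^2*‖d‖^2 + ‖gradient f (x + d)‖^2 - ‖r‖^2 := by
      linear_combination 2*μ*identA - identB
    have hmain : ‖gradient f (x + d)‖^2/(4*M*‖d‖) + 3/8*M*‖d‖^3
        ≤ ⟪gradient f (x + d), -d⟫ :=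
      scalar_step_aux M μ ‖d‖ ‖gradient f (x + d)‖ ‖r‖ _ hM hs hμpos hμl hμu
        (norm_nonneg _) hRle h2
    exact le_trans
      (key_ineq_aux M ‖d‖ ‖gradient f (x + d)‖ hM hs (norm_nonneg _)) hmain
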